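/- Let G' with list assignment L be any graph obtained from a graph G by the NP-hardness construction (with any choice of (a,b)-forbidding paths of length six). Let γ be an L-coloring of G' and let uv ∈ E(G). If γ(u) = γ(v), then γ(z_uv) = 4. -/

import Mathlib

/-- An `L`-coloring of `G`: every vertex gets a color from its list, and adjacent
vertices get different colors. -/
def IsLColoring {V : Type*} (G : SimpleGraph V) (L : V → Finset ℕ) (γ : V → ℕ) : Prop :=
  (∀ v, γ v ∈ L v) ∧ ∀ u v, G.Adj u v → γ u ≠ γ v

/-- An `L`-recoloring sequence `seq 0, …, seq ℓ` from `α` to `β`: all are `L`-colorings,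
and consecutive colorings differ on at most one vertex. -/
def IsLRecolSeq {V : Type*} (G : SimpleGraph V) (L : V → Finset ℕ) (seq : ℕ → V → ℕ)
    (ℓ : ℕ) (α β : V → ℕ) : Prop :=
  seq 0 = α ∧ seq ℓ = β ∧ (∀ i ≤ ℓ, IsLColoring G L (seq i)) ∧
  ∀ i < ℓ, ∀ u w, seq i u ≠ seq (i+1) u → seq i w ≠ seq (i+1) w → u = w

/-- The path `w_0, w_1, …, w_6` of length six. -/
def PathG7 : SimpleGraph (Fin 7) where
  Adj i j := i.val + 1 = j.val ∨ j.val + 1 = i.val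
  symm := ⟨fun _ _ h => h.symm⟩
  loopless := ⟨fun i h => by rcases h with h | h <;> omega⟩

/-- An `(a,b)`-forbidding path of length six, with end vertices `w_0 = u` and `w_6 = v`:
all lists are contained in `{1,2,3,4}`; a pair `(x,y) ∈ L(u) × L(v)` is realized by some
`L`-coloring iff `x ≠ a` or `y ≠ b` (such pairs are admissible); and from any `L`-coloring
`γ` and admissible pair `(x,y)` with `x = γ(u)` or `y = γ(v)`, one can `L`-recolor to a
coloring `δ` with `δ(u) = x`, `δ(v) = y`, recoloring every internal vertex at most once
and not recoloring `u` and `v` until the last step. -/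
def IsForbiddingPath (L : Fin 7 → Finset ℕ) (a b : ℕ) : Prop :=
  (∀ w, L w ⊆ ({1, 2, 3, 4} : Finset ℕ)) ∧
  (∀ x ∈ L 0, ∀ y ∈ L 6,
    ((x ≠ a ∨ y ≠ b) ↔ ∃ γ, IsLColoring PathG7 L γ ∧ γ 0 = x ∧ γ 6 = y)) ∧
  (∀ γ, IsLColoring PathG7 L γ → ∀ x ∈ L 0, ∀ y ∈ L 6, (x ≠ a ∨ y ≠ b) →
    (x = γ 0 ∨ y = γ 6) →
    ∃ ℓ seq δ, IsLRecolSeq PathG7 L seq ℓ γ δ ∧ δ 0 = x ∧ δ 6 = y ∧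
      (∀ w : Fin 7, w ≠ 0 → w ≠ 6 →
        ((Finset.range ℓ).filter (fun i => seq i w ≠ seq (i+1) w)).card ≤ 1) ∧
      (∀ i < ℓ, seq i 0 = γ 0 ∧ seq i 6 = γ 6))

/-- Vertices of the graph `G'` of the NP-hardness construction, built from a graph on
`Fin N` (edges of `G` are oriented as pairs `(u,v)` with `u < v`): `orig w` are the
original vertices; `x u v`, `y u v`, `z u v` are the gadget vertices `x_uv`, `y_uv`,
`z_uv`; `p j u v s` is the `s`-th internal vertex (`s ∈ {0,…,4}`) of the `j`-th
forbidding path (`j ∈ {0,…,7}`) of the gadget of edge `uv`; `A`, `B`, `C`, `D` are the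
four special vertices `a`, `b`, `c`, `d`. -/
inductive NPV (N : ℕ) : Type
  | orig : Fin N → NPV N
  | x : Fin N → Fin N → NPV N
  | y : Fin N → Fin N → NPV N
  | z : Fin N → Fin N → NPV N
  | p : Fin 8 → Fin N → Fin N → Fin 5 → NPV N
  | A : NPV N
  | B : NPV N
  | C : NPV N
  | D : NPV N
deriving DecidableEq

/-- Oriented edges of `G`: `u < v` and `uv ∈ E(G)`. -/
def OEdge {N : ℕ} (G : SimpleGraph (Fin N)) (u v : Fin N) : Prop := G.Adj u v ∧ u < v

/-- Start vertex of the `j`-th forbidding path of the gadget of edge `uv`. -/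
def fpStart {N : ℕ} (u v : Fin N) : Fin 8 → NPV N :=
  ![.orig u, .orig u, .orig u, .orig v, .orig v, .orig v, .x u v, .y u v]

/-- End vertex of the `j`-th forbidding path of the gadget of edge `uv`. -/
def fpEnd {N : ℕ} (u v : Fin N) : Fin 8 → NPV N :=
  ![.x u v, .x u v, .y u v, .x u v, .x u v, .y u v, .z u v, .z u v]

/-- The forbidden pair `(a,b)` of the `j`-th forbidding path of a gadget: a
`(1,2)`-, `(3,1)`-forbidding path from `u` to `x_uv`, a `(2,3)`-forbidding path from `u`
to `y_uv`, a `(2,1)`-, `(3,2)`-forbidding path from `v` to `x_uv`, a `(1,3)`-forbidding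
path from `v` to `y_uv`, a `(4,1)`-forbidding path from `x_uv` to `z_uv`, and a
`(4,2)`-forbidding path from `y_uv` to `z_uv`. -/
def fpPair : Fin 8 → ℕ × ℕ :=
  ![(1, 2), (3, 1), (2, 3), (2, 1), (3, 2), (1, 3), (4, 1), (4, 2)]

/-- Base (asymmetric) adjacency relation of `G'`: direct edges `u x_uv`, `u y_uv`;
the edges of the forbidding paths; all edges among `{a,b,c,d}` except `cd`;
and all edges from `Z` to `c`. -/
def NPRel {N : ℕ} (G : SimpleGraph (Fin N)) : NPV N → NPV N → Prop := fun w w' =>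
  (∃ u v, OEdge G u v ∧ w = .orig u ∧ (w' = .x u v ∨ w' = .y u v)) ∨
  (∃ u v j, OEdge G u v ∧ w = fpStart u v j ∧ w' = .p j u v 0) ∨
  (∃ u v j, ∃ s s' : Fin 5, OEdge G u v ∧ s'.val = s.val + 1 ∧
    w = .p j u v s ∧ w' = .p j u v s') ∨
  (∃ u v j, OEdge G u v ∧ w = .p j u v 4 ∧ w' = fpEnd u v j) ∨
  (w = .A ∧ (w' = .B ∨ w' = .C ∨ w' = .D)) ∨
  (w = .B ∧ (w' = .C ∨ w' = .D)) ∨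
  (∃ u v, OEdge G u v ∧ w = .z u v ∧ w' = .C)

/-- The graph `G'` of the NP-hardness construction. -/
def NPGraph {N : ℕ} (G : SimpleGraph (Fin N)) : SimpleGraph (NPV N) where
  Adj w w' := w ≠ w' ∧ (NPRel G w w' ∨ NPRel G w' w)
  symm := ⟨fun w w' h => ⟨h.1.symm, h.2.symm⟩⟩
  loopless := ⟨fun w h => h.1 rfl⟩

/-- The list assignment of `G'`, given the (arbitrary) lists `Lp` on the internal
vertices of the forbidding paths: `L(u) = {1,2,3}` for original vertices,
`L(x_uv) = {1,2,4}`, `L(y_uv) = {3,4}`, `L(z_uv) = {1,2,4}`, `L(a) = {1,2,3}`,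
`L(b) = {1,2}`, `L(c) = {3,4}`, `L(d) = {4}`. -/
def NPLists {N : ℕ} (Lp : Fin 8 → Fin N → Fin N → Fin 5 → Finset ℕ) :
    NPV N → Finset ℕ
  | .orig _ => {1, 2, 3}
  | .x _ _ => {1, 2, 4}
  | .y _ _ => {3, 4}
  | .z _ _ => {1, 2, 4}
  | .p j u v s => Lp j u v s
  | .A => {1, 2, 3}
  | .B => {1, 2}
  | .C => {3, 4}
  | .D => {4}

/-- The lists along the `j`-th forbidding path of the gadget of edge `uv`, viewed as a
standalone path of length six. -/
def gadgetPathLists {N : ℕ} (Lp : Fin 8 → Fin N → Fin N → Fin 5 → Finset ℕ)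
    (j : Fin 8) (u v : Fin N) : Fin 7 → Finset ℕ :=
  ![NPLists Lp (fpStart u v j), Lp j u v 0, Lp j u v 1, Lp j u v 2, Lp j u v 3,
    Lp j u v 4, NPLists Lp (fpEnd u v j)]

/-- The internal lists `Lp` are a valid choice for the construction: each gadget path is
an `(a,b)`-forbidding path of length six for its prescribed pair `(a,b)`. -/
def NPGoodLists {N : ℕ} (G : SimpleGraph (Fin N))
    (Lp : Fin 8 → Fin N → Fin N → Fin 5 → Finset ℕ) : Prop :=
  ∀ u v, OEdge G u v → ∀ j : Fin 8,
    IsForbiddingPath (gadgetPathLists Lp j u v) (fpPair j).1 (fpPair j).2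



lemma start_ne_p {N : ℕ} (u v : Fin N) (j : Fin 8) (s : Fin 5) :
    fpStart u v j ≠ NPV.p j u v s := by
  fin_cases j <;> exact fun h => by cases h

lemma end_ne_p {N : ℕ} (u v : Fin N) (j : Fin 8) (s : Fin 5) :
    fpEnd u v j ≠ NPV.p j u v s := by
  fin_cases j <;> exact fun h => by cases h

lemma adj_start {N : ℕ} {G : SimpleGraph (Fin N)} {u v : Fin N} (h : OEdge G u v)
    (j : Fin 8) : (NPGraph G).Adj (fpStart u v j) (NPV.p j u v 0) :=
  ⟨start_ne_p u v j 0, Or.inl (Or.inr (Or.inl ⟨u, v, j, h, rfl, rfl⟩))⟩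

lemma adj_end {N : ℕ} {G : SimpleGraph (Fin N)} {u v : Fin N} (h : OEdge G u v)
    (j : Fin 8) : (NPGraph G).Adj (NPV.p j u v 4) (fpEnd u v j) :=
  ⟨fun he => end_ne_p u v j 4 he.symm,
    Or.inl (Or.inr (Or.inr (Or.inr (Or.inl ⟨u, v, j, h, rfl, rfl⟩))))⟩

lemma adj_internal {N : ℕ} {G : SimpleGraph (Fin N)} {u v : Fin N} (h : OEdge G u v)
    (j : Fin 8) (s s' : Fin 5) (hs : s'.val = s.val + 1) :
    (NPGraph G).Adj (NPV.p j u v s) (NPV.p j u v s') := by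
  refine ⟨fun he => ?_, Or.inl (Or.inr (Or.inr (Or.inl ⟨u, v, j, s, s', h, hs, rfl, rfl⟩)))⟩
  injection he with _ _ _ h4
  omega

lemma adj_ux {N : ℕ} {G : SimpleGraph (Fin N)} {u v : Fin N} (h : OEdge G u v) :
    (NPGraph G).Adj (NPV.orig u) (NPV.x u v) :=
  ⟨by simp, Or.inl (Or.inl ⟨u, v, h, rfl, Or.inl rfl⟩)⟩

lemma adj_uy {N : ℕ} {G : SimpleGraph (Fin N)} {u v : Fin N} (h : OEdge G u v) :
    (NPGraph G).Adj (NPV.orig u) (NPV.y u v) :=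
  ⟨by simp, Or.inl (Or.inl ⟨u, v, h, rfl, Or.inr rfl⟩)⟩

lemma key_constraint {N : ℕ} {G : SimpleGraph (Fin N)}
    {Lp : Fin 8 → Fin N → Fin N → Fin 5 → Finset ℕ} (hLp : NPGoodLists G Lp)
    {γ : NPV N → ℕ} (hγ : IsLColoring (NPGraph G) (NPLists Lp) γ)
    {u v : Fin N} (huv : OEdge G u v) (j : Fin 8) :
    γ (fpStart u v j) ≠ (fpPair j).1 ∨ γ (fpEnd u v j) ≠ (fpPair j).2 := by
  obtain ⟨hmem, hadj⟩ := hγ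
  set restr : Fin 7 → ℕ := ![γ (fpStart u v j), γ (.p j u v 0), γ (.p j u v 1),
    γ (.p j u v 2), γ (.p j u v 3), γ (.p j u v 4), γ (fpEnd u v j)] with hr
  have hcol : IsLColoring PathG7 (gadgetPathLists Lp j u v) restr := by
    constructor
    · intro w
      fin_cases w <;> exact hmem _
    · intro a b hab
      fin_cases a <;> fin_cases b <;>
        first
          | (rcases hab with h | h <;> exact absurd h (by decide))
          | exact hadj _ _ (adj_start huv j)
          | exact fun he => hadj _ _ (adj_start huv j) he.symm
          | exact hadj _ _ (adj_end huv j)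
          | exact fun he => hadj _ _ (adj_end huv j) he.symm
          | exact hadj _ _ (adj_internal huv j 0 1 rfl)
          | exact fun he => hadj _ _ (adj_internal huv j 0 1 rfl) he.symm
          | exact hadj _ _ (adj_internal huv j 1 2 rfl)
          | exact fun he => hadj _ _ (adj_internal huv j 1 2 rfl) he.symm
          | exact hadj _ _ (adj_internal huv j 2 3 rfl)
          | exact fun he => hadj _ _ (adj_internal huv j 2 3 rfl) he.symm
          | exact hadj _ _ (adj_internal huv j 3 4 rfl)
          | exact fun he => hadj _ _ (adj_internal huv j 3 4 rfl) he.symm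
  have h0 : restr 0 ∈ gadgetPathLists Lp j u v 0 := hcol.1 0
  have h6 : restr 6 ∈ gadgetPathLists Lp j u v 6 := hcol.1 6
  exact ((hLp u v huv j).2.1 (restr 0) h0 (restr 6) h6).mpr ⟨restr, hcol, rfl, rfl⟩

/-- For any `L`-coloring `γ` of `G'` and any edge `uv ∈ E(G)`:
if `γ(u) = γ(v)` then `γ(z_uv) = 4`. -/
theorem stmt_13 (N : ℕ) (G : SimpleGraph (Fin N))
    (Lp : Fin 8 → Fin N → Fin N → Fin 5 → Finset ℕ) (hLp : NPGoodLists G Lp)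
    (γ : NPV N → ℕ) (hγ : IsLColoring (NPGraph G) (NPLists Lp) γ)
    (u v : Fin N) (huv : OEdge G u v) (heq : γ (.orig u) = γ (.orig v)) :
    γ (.z u v) = 4 := by
  have hx := hγ.2 _ _ (adj_ux huv)
  have hy := hγ.2 _ _ (adj_uy huv)
  have k0 : γ (.orig u) ≠ 1 ∨ γ (.x u v) ≠ 2 := key_constraint hLp hγ huv 0
  have k1 : γ (.orig u) ≠ 3 ∨ γ (.x u v) ≠ 1 := key_constraint hLp hγ huv 1
  have k2 : γ (.orig u) ≠ 2 ∨ γ (.y u v) ≠ 3 := key_constraint hLp hγ huv 2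
  have k3 : γ (.orig v) ≠ 2 ∨ γ (.x u v) ≠ 1 := key_constraint hLp hγ huv 3
  have k4 : γ (.orig v) ≠ 3 ∨ γ (.x u v) ≠ 2 := key_constraint hLp hγ huv 4
  have k5 : γ (.orig v) ≠ 1 ∨ γ (.y u v) ≠ 3 := key_constraint hLp hγ huv 5
  have k6 : γ (.x u v) ≠ 4 ∨ γ (.z u v) ≠ 1 := key_constraint hLp hγ huv 6
  have k7 : γ (.y u v) ≠ 4 ∨ γ (.z u v) ≠ 2 := key_constraint hLp hγ huv 7
  have mu := hγ.1 (.orig u)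
  have mx := hγ.1 (.x u v)
  have my := hγ.1 (.y u v)
  have mz := hγ.1 (.z u v)
  simp only [NPLists, Finset.mem_insert, Finset.mem_singleton] at mu mx my mz
  omega
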